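/- Fix n, m, T : ℕ. Let A be a block-diagonal real matrix indexed by ι = Fin (T+1) × Fin n, B a block-diagonal real matrix with rows indexed by ι and columns by κ = Fin (T+1) × Fin m, and Z the block-downshift matrix on ι. Suppose Φx (indexed ι × ι) and Φu (indexed κ × ι) are block lower triangular real matrices satisfying (I - Z*A) * Φx - Z*B * Φu = I. Then Φx is invertible, the controller K := Φu * Φx⁻¹ is block lower triangular, I - Z*(A + B*K) is invertible with (I - Z*(A + B*K))⁻¹ = Φx, and K * (I - Z*(A + B*K))⁻¹ = Φu. -/

import Mathlib

/-- A matrix indexed by `(block, withinBlock)` pairs is block lower triangular if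
the `(i,j)` block vanishes whenever `i < j`. -/
def BlockLowerTriangular {T n m : ℕ}
    (M : Matrix (Fin (T + 1) × Fin n) (Fin (T + 1) × Fin m) ℝ) : Prop :=
  ∀ (i j : Fin (T + 1)) (a : Fin n) (b : Fin m), i < j → M (i, a) (j, b) = 0

/-- A matrix indexed by `(block, withinBlock)` pairs is block diagonal if
the `(i,j)` block vanishes whenever `i ≠ j`. -/
def BlockDiagonal {T n m : ℕ}
    (M : Matrix (Fin (T + 1) × Fin n) (Fin (T + 1) × Fin m) ℝ) : Prop :=
  ∀ (i j : Fin (T + 1)) (a : Fin n) (b : Fin m), i ≠ j → M (i, a) (j, b) = 0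

/-- The block-downshift matrix: identity on the first block subdiagonal, zero elsewhere. -/
def blockDownshift (T n : ℕ) :
    Matrix (Fin (T + 1) × Fin n) (Fin (T + 1) × Fin n) ℝ :=
  fun p q => if (p.1 : ℕ) = (q.1 : ℕ) + 1 ∧ p.2 = q.2 then 1 else 0

def SBLT {T n m : ℕ}
    (M : Matrix (Fin (T + 1) × Fin n) (Fin (T + 1) × Fin m) ℝ) : Prop :=
  ∀ (i j : Fin (T + 1)) (a : Fin n) (b : Fin m), i ≤ j → M (i, a) (j, b) = 0

lemma sblt_blt {T n m : ℕ} {M : Matrix (Fin (T + 1) × Fin n) (Fin (T + 1) × Fin m) ℝ}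
    (h : SBLT M) : BlockLowerTriangular M :=
  fun i j a b hij => h i j a b hij.le

lemma blt_mul {T n m p : ℕ} {M : Matrix (Fin (T + 1) × Fin n) (Fin (T + 1) × Fin m) ℝ}
    {N : Matrix (Fin (T + 1) × Fin m) (Fin (T + 1) × Fin p) ℝ}
    (hM : BlockLowerTriangular M) (hN : BlockLowerTriangular N) :
    BlockLowerTriangular (M * N) := by
  intro i j a b hij
  rw [Matrix.mul_apply]
  apply Finset.sum_eq_zero
  rintro ⟨l, c⟩ -
  rcases lt_or_ge i l with h | h
  · rw [hM i l a c h, zero_mul]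
  · rw [hN l j c b (lt_of_le_of_lt h hij), mul_zero]

lemma sblt_mul_blt {T n m p : ℕ} {M : Matrix (Fin (T + 1) × Fin n) (Fin (T + 1) × Fin m) ℝ}
    {N : Matrix (Fin (T + 1) × Fin m) (Fin (T + 1) × Fin p) ℝ}
    (hM : SBLT M) (hN : BlockLowerTriangular N) :
    SBLT (M * N) := by
  intro i j a b hij
  rw [Matrix.mul_apply]
  apply Finset.sum_eq_zero
  rintro ⟨l, c⟩ -
  rcases le_or_gt i l with h | h
  · rw [hM i l a c h, zero_mul]
  · rw [hN l j c b (lt_of_lt_of_le h hij), mul_zero]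

lemma Z_mul_bd {T n m : ℕ} {D : Matrix (Fin (T + 1) × Fin n) (Fin (T + 1) × Fin m) ℝ}
    (hD : BlockDiagonal D) : SBLT (blockDownshift T n * D) := by
  intro i j a b hij
  rw [Matrix.mul_apply]
  apply Finset.sum_eq_zero
  rintro ⟨l, c⟩ -
  by_cases h : (i : ℕ) = (l : ℕ) + 1 ∧ a = c
  · rw [hD l j c b (by
      intro hlj
      subst hlj
      have : (l : ℕ) < (i : ℕ) := by omega
      exact absurd hij (not_le.mpr this)), mul_zero]
  · simp only [blockDownshift, if_neg h, zero_mul]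

lemma sblt_pow_zero {T n : ℕ} {M : Matrix (Fin (T + 1) × Fin n) (Fin (T + 1) × Fin n) ℝ}
    (hM : SBLT M) : ∀ (k : ℕ) (i j : Fin (T + 1)) (a b : Fin n),
      (i : ℕ) < (j : ℕ) + k → (M ^ k) (i, a) (j, b) = 0 := by
  intro k
  induction k with
  | zero =>
      intro i j a b h
      rw [pow_zero]
      apply Matrix.one_apply_ne
      intro hc
      rw [Prod.mk.injEq] at hc
      have := congrArg Fin.val hc.1
      omega
  | succ k ih =>
      intro i j a b h
      rw [pow_succ, Matrix.mul_apply]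
      apply Finset.sum_eq_zero
      rintro ⟨l, c⟩ -
      rcases lt_or_ge (i : ℕ) ((l : ℕ) + k) with h' | h'
      · rw [ih i l a c h', zero_mul]
      · rw [hM l j c b (by rw [Fin.le_def]; omega), mul_zero]

lemma sblt_nilpotent {T n : ℕ} {M : Matrix (Fin (T + 1) × Fin n) (Fin (T + 1) × Fin n) ℝ}
    (hM : SBLT M) : M ^ (T + 1) = 0 := by
  ext ⟨i, a⟩ ⟨j, b⟩
  rw [Matrix.zero_apply]
  exact sblt_pow_zero hM (T + 1) i j a b (by omega)

lemma blt_one {T n : ℕ} : BlockLowerTriangular (1 : Matrix (Fin (T + 1) × Fin n) (Fin (T + 1) × Fin n) ℝ) := by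
  intro i j a b hij
  apply Matrix.one_apply_ne
  intro h
  rw [Prod.mk.injEq] at h
  exact absurd hij (by rw [h.1]; exact lt_irrefl j)

lemma blt_pow {T n : ℕ} {M : Matrix (Fin (T + 1) × Fin n) (Fin (T + 1) × Fin n) ℝ}
    (hM : BlockLowerTriangular M) (k : ℕ) : BlockLowerTriangular (M ^ k) := by
  induction k with
  | zero => simpa using blt_one
  | succ k ih => rw [pow_succ]; exact blt_mul ih hM

lemma blt_sum {T n m : ℕ} {s : Finset ℕ}
    {f : ℕ → Matrix (Fin (T + 1) × Fin n) (Fin (T + 1) × Fin m) ℝ}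
    (hf : ∀ k ∈ s, BlockLowerTriangular (f k)) :
    BlockLowerTriangular (∑ k ∈ s, f k) := by
  intro i j a b hij
  rw [Matrix.sum_apply]
  exact Finset.sum_eq_zero fun k hk => hf k hk i j a b hij

lemma sblt_add {T n m : ℕ} {M N : Matrix (Fin (T + 1) × Fin n) (Fin (T + 1) × Fin m) ℝ}
    (hM : SBLT M) (hN : SBLT N) : SBLT (M + N) := by
  intro i j a b hij
  rw [Matrix.add_apply, hM i j a b hij, hN i j a b hij, add_zero]

lemma sblt_neg {T n m : ℕ} {M : Matrix (Fin (T + 1) × Fin n) (Fin (T + 1) × Fin m) ℝ}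
    (hM : SBLT M) : SBLT (-M) := by
  intro i j a b hij
  rw [Matrix.neg_apply, hM i j a b hij, neg_zero]

/-- Finite horizon System Level Synthesis, Theorem 1, statement (2): any block lower
triangular pair `{Φx, Φu}` satisfying the affine constraint `(I - ZA) Φx - ZB Φu = I`
is achieved by the controller `K = Φu Φx⁻¹`, which is itself block lower triangular;
moreover `I - Z(A + BK)` is invertible with inverse `Φx`, and
`K (I - Z(A + BK))⁻¹ = Φu`. -/
theorem stmt2 (n m T : ℕ)
    (A : Matrix (Fin (T + 1) × Fin n) (Fin (T + 1) × Fin n) ℝ)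
    (B : Matrix (Fin (T + 1) × Fin n) (Fin (T + 1) × Fin m) ℝ)
    (Φx : Matrix (Fin (T + 1) × Fin n) (Fin (T + 1) × Fin n) ℝ)
    (Φu : Matrix (Fin (T + 1) × Fin m) (Fin (T + 1) × Fin n) ℝ)
    (hA : BlockDiagonal A) (hB : BlockDiagonal B)
    (hΦx : BlockLowerTriangular Φx) (hΦu : BlockLowerTriangular Φu)
    (haffine : (1 - blockDownshift T n * A) * Φx - blockDownshift T n * B * Φu = 1) :
    IsUnit Φx ∧
    BlockLowerTriangular (Φu * Φx⁻¹) ∧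
    IsUnit (1 - blockDownshift T n * (A + B * (Φu * Φx⁻¹))) ∧
    (1 - blockDownshift T n * (A + B * (Φu * Φx⁻¹)))⁻¹ = Φx ∧
    Φu * Φx⁻¹ * (1 - blockDownshift T n * (A + B * (Φu * Φx⁻¹)))⁻¹ = Φu := by
  set Z := blockDownshift T n with hZ
  set N := Z * A * Φx + Z * B * Φu with hNdef
  have hN : SBLT N :=
    sblt_add (sblt_mul_blt (Z_mul_bd hA) hΦx) (sblt_mul_blt (Z_mul_bd hB) hΦu)
  have hΦxeq : Φx = 1 + N := by
    have h : Φx - N = 1 := by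
      rw [hNdef, ← haffine]
      noncomm_ring
    rw [← h]
    noncomm_ring
  have hnil : (-N) ^ (T + 1) = 0 := sblt_nilpotent (sblt_neg hN)
  set G := ∑ k ∈ Finset.range (T + 1), (-N) ^ k with hGdef
  have hG1 : G * Φx = 1 := by
    have h := geom_sum_mul (-N) (T + 1)
    rw [hnil] at h
    have h2 : G * (-Φx) = -1 := by
      rw [hΦxeq]
      calc G * -(1 + N) = G * ((-N) - 1) := by noncomm_ring
        _ = 0 - 1 := h
        _ = -1 := zero_sub 1
    have := congrArg Neg.neg h2
    rwa [← Matrix.mul_neg, neg_neg, neg_neg] at this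
  have hG2 : Φx * G = 1 := mul_eq_one_comm.mp hG1
  have hUnit : IsUnit Φx := (Matrix.isUnit_iff_isUnit_det Φx).mpr (IsUnit.of_mul_eq_one _ (by rw [← Matrix.det_mul, hG2, Matrix.det_one]))
  have hinv : Φx⁻¹ = G := Matrix.inv_eq_right_inv hG2
  have hGblt : BlockLowerTriangular G :=
    blt_sum fun k _ => blt_pow (sblt_blt (sblt_neg hN)) k
  have hKblt : BlockLowerTriangular (Φu * Φx⁻¹) := by
    rw [hinv]; exact blt_mul hΦu hGblt
  have hinvmul : Φx⁻¹ * Φx = 1 := by rw [hinv]; exact hG1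
  have hK : Φu * Φx⁻¹ * Φx = Φu := by rw [Matrix.mul_assoc, hinvmul, Matrix.mul_one]
  have h1 : (1 - Z * (A + B * (Φu * Φx⁻¹))) * Φx = 1 := by
    have hexp : (1 - Z * (A + B * (Φu * Φx⁻¹))) * Φx
        = (1 - Z * A) * Φx - Z * B * (Φu * Φx⁻¹ * Φx) := by noncomm_ring; simp only [Matrix.mul_assoc]
    rw [hexp, hK, haffine]
  refine ⟨hUnit, hKblt, (Matrix.isUnit_iff_isUnit_det _).mpr (IsUnit.of_mul_eq_one _ (by rw [← Matrix.det_mul, h1, Matrix.det_one])), Matrix.inv_eq_right_inv h1, ?_⟩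
  rw [Matrix.inv_eq_right_inv h1, hK]
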